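/- Let x̄ : Fin m × Fin T → ℝ≥0 satisfy Σ_{j,t} x̄(j,t) = 1, let α ∈ (0,1), and let τ^α = min{τ : Σ_j Σ_{u ≤ τ} x̄(j,u) ≥ α}. Define C̄ = Σ_j Σ_t τ_{t-1}·x̄(j,t), where 0 < τ_0 ≤ τ_1 ≤ ... is nondecreasing. Then C̄ ≥ (1-α)·τ_{τ^α - 1}. -/

import Mathlib

/-- The α-point lower bound on the fractional completion time: at least a
`(1-α)` fraction of the job's mass lies in intervals with lower endpoint at
least `τ (τα)`.  (Here interval `t : Fin T` has lower endpoint `τ t.val`,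
matching the paper's `τ_{t-1}` with `1`-based indexing.) -/
theorem stmt_4 (m T : ℕ) (x : Fin m × Fin T → ℝ)
    (hx : ∀ p, 0 ≤ x p)
    (hsum : ∑ j : Fin m, ∑ t : Fin T, x (j, t) = 1)
    (α : ℝ) (hα : α ∈ Set.Ioo (0 : ℝ) 1)
    (τ : ℕ → ℝ) (hτ0 : 0 < τ 0) (hτmono : Monotone τ)
    (τα : Fin T)
    (hτα : α ≤ ∑ j : Fin m, ∑ u ∈ Finset.univ.filter (fun u : Fin T => u ≤ τα), x (j, u))
    (hταmin : ∀ t : Fin T,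
      α ≤ ∑ j : Fin m, ∑ u ∈ Finset.univ.filter (fun u : Fin T => u ≤ t), x (j, u) → τα ≤ t) :
    (1 - α) * τ (τα : ℕ) ≤ ∑ j : Fin m, ∑ t : Fin T, τ (t : ℕ) * x (j, t) := by
  have hτnn : ∀ n, 0 ≤ τ n := fun n => le_trans hτ0.le (hτmono (Nat.zero_le n))
  set A : Finset (Fin T) := Finset.univ.filter (fun t => τα ≤ t) with hA
  set B : Finset (Fin T) := Finset.univ.filter (fun t => t < τα) with hB
  -- mass below τα is ≤ α
  have hBle : ∑ j : Fin m, ∑ t ∈ B, x (j, t) ≤ α := by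
    rcases Nat.eq_zero_or_pos τα.val with h0 | hpos
    · have : B = ∅ := by
        apply Finset.eq_empty_of_forall_notMem
        intro t ht
        simp only [hB, Finset.mem_filter] at ht
        exact absurd ht.2 (by simp [Fin.lt_def, h0])
      simp [this, hα.1.le]
    · set p : Fin T := ⟨τα.val - 1, lt_of_le_of_lt (Nat.sub_le _ _) τα.isLt⟩ with hp
      have hBeq : B = Finset.univ.filter (fun u : Fin T => u ≤ p) := by
        ext t
        simp only [hB, Finset.mem_filter, Finset.mem_univ, true_and, Fin.lt_def, Fin.le_def]
        simp only [hp]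
        omega
      by_contra hcon
      push_neg at hcon
      have := hταmin p (by rw [hBeq] at hcon; exact hcon.le)
      simp only [Fin.le_def, hp] at this
      omega
  -- split the sum
  have hsplit : ∀ j : Fin m, ∑ t : Fin T, x (j, t)
      = ∑ t ∈ A, x (j, t) + ∑ t ∈ B, x (j, t) := by
    intro j
    rw [hA, hB, ← Finset.sum_filter_add_sum_filter_not Finset.univ (fun t => τα ≤ t)]
    congr 1
    apply Finset.sum_congr _ (fun _ _ => rfl)
    ext t; simp [not_le]
  have hAmass : 1 - α ≤ ∑ j : Fin m, ∑ t ∈ A, x (j, t) := by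
    have : ∑ j : Fin m, ∑ t ∈ A, x (j, t) + ∑ j : Fin m, ∑ t ∈ B, x (j, t) = 1 := by
      rw [← Finset.sum_add_distrib, ← hsum]
      exact Finset.sum_congr rfl (fun j _ => (hsplit j).symm)
    linarith
  have step1 : (1 - α) * τ (τα : ℕ) ≤ ∑ j : Fin m, ∑ t ∈ A, τ (τα : ℕ) * x (j, t) := by
    have : ∑ j : Fin m, ∑ t ∈ A, τ (τα : ℕ) * x (j, t)
        = τ (τα : ℕ) * ∑ j : Fin m, ∑ t ∈ A, x (j, t) := by
      simp [Finset.mul_sum]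
    rw [this]
    rw [mul_comm]
    exact mul_le_mul_of_nonneg_left hAmass (hτnn _)
  have step2 : ∑ j : Fin m, ∑ t ∈ A, τ (τα : ℕ) * x (j, t)
      ≤ ∑ j : Fin m, ∑ t ∈ A, τ (t : ℕ) * x (j, t) := by
    apply Finset.sum_le_sum
    intro j _
    apply Finset.sum_le_sum
    intro t ht
    have hle : (τα : ℕ) ≤ (t : ℕ) := by
      simp only [hA, Finset.mem_filter] at ht
      exact ht.2
    exact mul_le_mul_of_nonneg_right (hτmono hle) (hx _)
  have step3 : ∑ j : Fin m, ∑ t ∈ A, τ (t : ℕ) * x (j, t)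
      ≤ ∑ j : Fin m, ∑ t : Fin T, τ (t : ℕ) * x (j, t) := by
    apply Finset.sum_le_sum
    intro j _
    apply Finset.sum_le_sum_of_subset_of_nonneg (Finset.filter_subset _ _)
    intro t _ _
    exact mul_nonneg (hτnn _) (hx _)
  linarith
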